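/- Let q ≥ 2, and f : ℕ → ℂ strongly q-multiplicative with |f| = 1 (i.e., f(aq+b) = f(a)f(b) for all a ∈ ℕ, 0 ≤ b < q). Define F_λ(t) = q^{-λ} Σ_{0≤u<q^λ} f(u) e(-tu/q^λ), φ_q(t) = |Σ_{0≤j<q} f(j) e(-jt)|, Ψ_q(t) = (1/q) Σ_{0≤r<q} φ_q(t + r/q), and let η = (1/log q)·log(max_{0≤t≤1} Ψ_q(t)). Then for all integers 0 ≤ δ ≤ λ, all a ∈ ℤ, and all real t: Σ_{0≤h<q^λ, h ≡ a mod q^δ} |F_λ(t+h)| ≤ q^{η(λ-δ)} |F_δ(t+a)|. -/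

import Mathlib

/-- `F_λ(t) = q^{-λ} Σ_{0≤u<q^λ} f(u) e(-tu/q^λ)`. -/
noncomputable def FL (q : ℕ) (f : ℕ → ℂ) (lam : ℕ) (t : ℝ) : ℂ :=
  (1 / (q : ℂ) ^ lam) * ∑ u ∈ Finset.range (q ^ lam),
    f u * Complex.exp (2 * Real.pi * Complex.I * (-(t * u) / (q : ℝ) ^ lam))

/-- `φ_q(t) = |Σ_{0≤j<q} f(j) e(-jt)|`. -/
noncomputable def phiq (q : ℕ) (f : ℕ → ℂ) (t : ℝ) : ℝ :=
  ‖∑ j ∈ Finset.range q, f j * Complex.exp (2 * Real.pi * Complex.I * (-(j * t)))‖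

/-- `Ψ_q(t) = (1/q) Σ_{0≤r<q} φ_q(t + r/q)`. -/
noncomputable def Psiq (q : ℕ) (f : ℕ → ℂ) (t : ℝ) : ℝ :=
  (1 / (q : ℝ)) * ∑ r ∈ Finset.range q, phiq q f (t + (r : ℝ) / q)

open Finset


lemma exp_tpi_int (n : ℤ) : Complex.exp (2 * Real.pi * Complex.I * n) = 1 := by
  simpa [mul_comm, mul_assoc] using Complex.exp_int_mul_two_pi_mul_I n

lemma exp_tpi_add_int (x : ℂ) (n : ℤ) :
    Complex.exp (2 * Real.pi * Complex.I * (x + n)) = Complex.exp (2 * Real.pi * Complex.I * x) := by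
  rw [mul_add, Complex.exp_add, exp_tpi_int, mul_one]

lemma abs_exp_tpi (x : ℝ) : ‖Complex.exp (2 * Real.pi * Complex.I * x)‖ = 1 := by
  have : (2 * Real.pi * Complex.I * x) = ((2 * Real.pi * x : ℝ) : ℂ) * Complex.I := by
    push_cast; ring
  rw [this, Complex.norm_exp_ofReal_mul_I]

lemma sum_range_mul {M : Type*} [AddCommMonoid M] (g : ℕ → M) (m n : ℕ) :
    ∑ u ∈ range (m * n), g u = ∑ p ∈ range m ×ˢ range n, g (p.1 * n + p.2) := by
  rcases Nat.eq_zero_or_pos n with rfl | hn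
  · simp
  refine Finset.sum_nbij' (fun u => (u / n, u % n)) (fun p => p.1 * n + p.2) ?_ ?_ ?_ ?_ ?_
  · intro u hu
    simp only [mem_range, mem_product] at hu ⊢
    exact ⟨Nat.div_lt_of_lt_mul (by rwa [mul_comm] at hu), Nat.mod_lt _ hn⟩
  · intro p hp
    simp only [mem_range, mem_product] at hp ⊢
    calc p.1 * n + p.2 < p.1 * n + n := by omega
      _ ≤ m * n := by nlinarith [hp.1]
  · intro u hu
    simp only
    exact Nat.div_add_mod' u n
  · intro p hp
    simp only [mem_range, mem_product] at hp
    ext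
    · simp only
      rw [add_comm, Nat.add_mul_div_right _ _ hn, Nat.div_eq_of_lt hp.2, zero_add]
    · simp only
      rw [add_comm, Nat.add_mul_mod_self_right, Nat.mod_eq_of_lt hp.2]
  · intro u hu
    congr 1
    exact (Nat.div_add_mod' u n).symm

section
variable {q : ℕ} (hq : 2 ≤ q) {f : ℕ → ℂ}

lemma FL_succ (hq : 2 ≤ q) (hfm : ∀ a b : ℕ, b < q → f (a * q + b) = f a * f b) (lam : ℕ) (t : ℝ) :
    FL q f (lam + 1) t =
      (1 / (q : ℂ)) * (∑ b ∈ range q, f b *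
          Complex.exp (2 * Real.pi * Complex.I * (-(t * b) / (q : ℝ) ^ (lam + 1)))) *
        FL q f lam t := by
  have hq0 : (q : ℂ) ≠ 0 := Nat.cast_ne_zero.mpr (by omega)
  have hqp : (q : ℂ) ^ lam ≠ 0 := pow_ne_zero _ hq0
  unfold FL
  rw [show (q : ℕ) ^ (lam + 1) = q ^ lam * q from pow_succ q lam, sum_range_mul (fun u => f u *
    Complex.exp (2 * Real.pi * Complex.I * (-(t * u) / (q : ℝ) ^ (lam + 1)))) (q ^ lam) q]
  rw [Finset.sum_product]
  have key : ∀ u' ∈ range (q ^ lam), ∀ b ∈ range q,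
      f (u' * q + b) * Complex.exp (2 * Real.pi * Complex.I *
        (-(t * (u' * q + b : ℕ)) / (q : ℝ) ^ (lam + 1)))
      = (f b * Complex.exp (2 * Real.pi * Complex.I * (-(t * b) / (q : ℝ) ^ (lam + 1)))) *
        (f u' * Complex.exp (2 * Real.pi * Complex.I * (-(t * u') / (q : ℝ) ^ lam))) := by
    intro u' _ b hb
    rw [hfm u' b (mem_range.mp hb)]
    have harg : (2 * Real.pi * Complex.I * (-(t * (u' * q + b : ℕ)) / (q : ℝ) ^ (lam + 1)) : ℂ)
        = 2 * Real.pi * Complex.I * (-(t * b) / (q : ℝ) ^ (lam + 1)) +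
          2 * Real.pi * Complex.I * (-(t * u') / (q : ℝ) ^ lam) := by
      push_cast
      field_simp
      ring
    rw [harg, Complex.exp_add]
    ring
  rw [Finset.sum_congr rfl (fun u' hu' => Finset.sum_congr rfl (fun b hb => key u' hu' b hb))]
  simp_rw [← Finset.sum_mul, ← Finset.mul_sum]
  rw [show ((q : ℂ)) ^ (lam + 1) = (q : ℂ) ^ lam * q from pow_succ _ lam]
  rw [one_div, one_div, one_div, mul_inv]
  ring
end

lemma abs_FL_succ (hq : 2 ≤ q) (hfm : ∀ a b : ℕ, b < q → f (a * q + b) = f a * f b)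
    (lam : ℕ) (t : ℝ) :
    ‖FL q f (lam + 1) t‖ =
      (1 / (q : ℝ)) * phiq q f (t / (q : ℝ) ^ (lam + 1)) * ‖FL q f lam t‖ := by
  have hQ : ((q : ℝ) ^ (lam + 1)) ≠ 0 :=
    pow_ne_zero _ (Nat.cast_ne_zero.mpr (by omega))
  rw [FL_succ hq hfm lam t, norm_mul, norm_mul]
  congr 2
  · rw [norm_div, norm_one, Complex.norm_natCast]
  · unfold phiq
    congr 1
    refine Finset.sum_congr rfl (fun b _ => ?_)
    congr 2
    push_cast
    field_simp

lemma exp_tpi_congr (x y : ℂ) (n : ℤ) (h : x = y + n) :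
    Complex.exp (2 * Real.pi * Complex.I * x) = Complex.exp (2 * Real.pi * Complex.I * y) := by
  rw [h, exp_tpi_add_int]

lemma FL_add_int_mul (hq : 2 ≤ q) (lam : ℕ) (t : ℝ) (m : ℤ) :
    FL q f lam (t + (m : ℝ) * (q : ℝ) ^ lam) = FL q f lam t := by
  have hQ : ((q : ℂ)) ≠ 0 := Nat.cast_ne_zero.mpr (by omega)
  unfold FL
  congr 1
  refine Finset.sum_congr rfl (fun u _ => ?_)
  congr 1
  apply exp_tpi_congr _ _ (-(m * u))
  push_cast
  field_simp
  ring

lemma phiq_add_int (s : ℝ) (n : ℤ) : phiq q f (s + n) = phiq q f s := by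
  unfold phiq
  congr 1
  refine Finset.sum_congr rfl (fun j _ => ?_)
  congr 1
  apply exp_tpi_congr _ _ (-(j * n))
  push_cast
  ring

lemma Psiq_add_int (s : ℝ) (n : ℤ) : Psiq q f (s + n) = Psiq q f s := by
  unfold Psiq
  congr 1
  refine Finset.sum_congr rfl (fun r _ => ?_)
  rw [show s + (n : ℝ) + (r : ℝ) / q = (s + (r : ℝ) / q) + (n : ℤ) by push_cast; ring]
  exact phiq_add_int _ _

lemma phiq_le (hq : 2 ≤ q) (hf1 : ∀ n, ‖f n‖ = 1) (s : ℝ) : phiq q f s ≤ q := by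
  unfold phiq
  calc ‖∑ j ∈ range q, f j * Complex.exp (2 * Real.pi * Complex.I * (-((j : ℝ) * s)))‖
      ≤ ∑ j ∈ range q, ‖f j * Complex.exp (2 * Real.pi * Complex.I * (-((j : ℝ) * s)))‖ :=
        norm_sum_le _ _
    _ = ∑ j ∈ range q, 1 := by
        refine Finset.sum_congr rfl (fun j _ => ?_)
        rw [norm_mul, hf1]
        rw [show (2 * Real.pi * Complex.I * (-((j : ℝ) * s)) : ℂ)
            = 2 * Real.pi * Complex.I * ((-((j : ℝ) * s) : ℝ) : ℂ) by push_cast; ring]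
        rw [abs_exp_tpi]
        norm_num
    _ = q := by simp

lemma phiq_nonneg (s : ℝ) : 0 ≤ phiq q f s := norm_nonneg _

lemma Psiq_nonneg (s : ℝ) : 0 ≤ Psiq q f s := by
  unfold Psiq
  apply mul_nonneg (by positivity)
  exact Finset.sum_nonneg fun r _ => phiq_nonneg _

lemma Psiq_le_sSup (hq : 2 ≤ q) (hf1 : ∀ n, ‖f n‖ = 1) (s : ℝ) :
    Psiq q f s ≤ sSup (Psiq q f '' Set.Icc 0 1) := by
  have hper : Psiq q f s = Psiq q f (Int.fract s) := by
    conv_lhs => rw [show s = Int.fract s + (⌊s⌋ : ℤ) by rw [Int.fract]; ring]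
    exact Psiq_add_int _ _
  rw [hper]
  apply le_csSup
  · refine ⟨q, ?_⟩
    rintro y ⟨x, -, rfl⟩
    unfold Psiq
    have h1 : ∑ r ∈ range q, phiq q f (x + (r : ℝ) / q) ≤ ∑ r ∈ range q, (q : ℝ) :=
      Finset.sum_le_sum (fun r _ => phiq_le hq hf1 _)
    have hq0 : (0 : ℝ) < q := by positivity
    calc (1 / (q : ℝ)) * ∑ r ∈ range q, phiq q f (x + (r : ℝ) / q)
        ≤ (1 / (q : ℝ)) * ∑ r ∈ range q, (q : ℝ) := by
          apply mul_le_mul_of_nonneg_left h1; positivity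
      _ ≤ q := by
          rw [Finset.sum_const, card_range, nsmul_eq_mul]
          rw [one_div]
          rw [inv_mul_le_iff₀ hq0]
  · exact ⟨Int.fract s, ⟨Int.fract_nonneg s, (Int.fract_lt_one s).le⟩, rfl⟩

lemma filter_base (hq : 2 ≤ q) (δ : ℕ) (a : ℤ) :
    (range (q ^ δ)).filter (fun h : ℕ => (h : ℤ) % (q : ℤ) ^ δ = a % (q : ℤ) ^ δ)
      = {(a % (q : ℤ) ^ δ).toNat} := by
  have hq0 : (0:ℤ) < (q:ℤ) ^ δ := by positivity
  have hmodlt : a % (q:ℤ)^δ < (q:ℤ)^δ := Int.emod_lt_of_pos a hq0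
  have hmodnn : (0:ℤ) ≤ a % (q:ℤ)^δ := Int.emod_nonneg a (by omega)
  ext h
  simp only [mem_filter, mem_range, Finset.mem_singleton]
  constructor
  · rintro ⟨h1, h2⟩
    have hh : (h:ℤ) % (q:ℤ)^δ = (h:ℤ) := Int.emod_eq_of_lt (by positivity) (by exact_mod_cast h1)
    rw [hh] at h2
    rw [← h2, Int.toNat_natCast]
  · rintro rfl
    refine ⟨?_, ?_⟩
    · have : ((a % (q:ℤ)^δ).toNat : ℤ) < ((q ^ δ : ℕ) : ℤ) := by
        rw [Int.toNat_of_nonneg hmodnn]; exact_mod_cast hmodlt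
      exact_mod_cast this
    · rw [Int.toNat_of_nonneg hmodnn, Int.emod_emod_of_dvd a (dvd_refl _)]

lemma key_induction (hq : 2 ≤ q) (hf1 : ∀ n, ‖f n‖ = 1)
    (hfm : ∀ a b : ℕ, b < q → f (a * q + b) = f a * f b)
    (δ : ℕ) (a : ℤ) (t : ℝ) (B : ℝ) (hB0 : 0 ≤ B) (hB : ∀ s, Psiq q f s ≤ B)
    (lam : ℕ) (hlam : δ ≤ lam) :
    ∑ h ∈ (range (q ^ lam)).filter (fun h : ℕ => (h : ℤ) % (q:ℤ)^δ = a % (q:ℤ)^δ),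
        ‖FL q f lam (t + h)‖
      ≤ B ^ (lam - δ) * ‖FL q f δ (t + a)‖ := by
  induction lam, hlam using Nat.le_induction with
  | base =>
    rw [filter_base hq δ a, Finset.sum_singleton, Nat.sub_self, pow_zero, one_mul]
    have hq0 : (0:ℤ) < (q:ℤ) ^ δ := by positivity
    have hmodnn : (0:ℤ) ≤ a % (q:ℤ)^δ := Int.emod_nonneg a (by omega)
    have hpt : t + (((a % (q:ℤ)^δ).toNat : ℕ) : ℝ)
        = (t + a) + ((-(a / (q:ℤ)^δ) : ℤ) : ℝ) * (q:ℝ)^δ := by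
      have h1 : ((a % (q:ℤ)^δ).toNat : ℤ) = a - (q:ℤ)^δ * (a / (q:ℤ)^δ) := by
        rw [Int.toNat_of_nonneg hmodnn, Int.emod_def]
      have h2 : (((a % (q:ℤ)^δ).toNat : ℕ) : ℝ) = (a:ℝ) - (q:ℝ)^δ * ((a / (q:ℤ)^δ : ℤ) : ℝ) := by
        exact_mod_cast congrArg (fun z : ℤ => (z : ℝ)) h1
      rw [h2]
      push_cast
      ring
    rw [hpt, FL_add_int_mul hq δ (t + a) _]
  | succ n hn ih =>
    have hq0 : (0:ℝ) < q := by positivity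
    have e1 : ∑ h ∈ (range (q ^ (n+1))).filter
          (fun h : ℕ => (h:ℤ) % (q:ℤ)^δ = a % (q:ℤ)^δ),
        ‖FL q f (n+1) (t + h)‖
        = ∑ h ∈ range (q * q ^ n),
            (if (h:ℤ) % (q:ℤ)^δ = a % (q:ℤ)^δ then ‖FL q f (n+1) (t+h)‖ else 0) := by
      rw [Finset.sum_filter, pow_succ']
    rw [e1, sum_range_mul (fun h => if (h:ℤ) % (q:ℤ)^δ = a % (q:ℤ)^δ then
        ‖FL q f (n+1) (t+h)‖ else 0) q (q^n), Finset.sum_product]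
    have hdvd : ∀ r h' : ℕ, ((r * q ^ n + h' : ℕ) : ℤ) % (q:ℤ)^δ = (h' : ℤ) % (q:ℤ)^δ := by
      intro r h'
      have hsplit : ((r * q ^ n + h' : ℕ) : ℤ) = (h' : ℤ) + ((r : ℤ) * (q:ℤ)^(n-δ)) * (q:ℤ)^δ := by
        push_cast
        rw [mul_assoc, ← pow_add, Nat.sub_add_cancel hn]
        ring
      rw [hsplit, Int.add_mul_emod_self_right]
    have e2 : ∀ r ∈ range q, ∀ h' ∈ range (q^n),
        (if ((r * q^n + h' : ℕ) : ℤ) % (q:ℤ)^δ = a % (q:ℤ)^δ then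
            ‖FL q f (n+1) (t + ((r * q^n + h' : ℕ) : ℝ))‖ else 0)
        = if (h' : ℤ) % (q:ℤ)^δ = a % (q:ℤ)^δ then
            (1/(q:ℝ)) * phiq q f ((t + h')/(q:ℝ)^(n+1) + (r:ℝ)/q) *
              ‖FL q f n (t + h')‖ else 0 := by
      intro r hr h' _
      rw [hdvd r h']
      by_cases hc : (h' : ℤ) % (q:ℤ)^δ = a % (q:ℤ)^δ
      · rw [if_pos hc, if_pos hc]
        have hpt : t + ((r * q^n + h' : ℕ) : ℝ) = (t + (h':ℝ)) + ((r:ℤ) : ℝ) * (q:ℝ)^n := by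
          push_cast; ring
        rw [hpt, abs_FL_succ hq hfm n, FL_add_int_mul hq n (t + (h':ℝ)) (r:ℤ)]
        congr 2
        congr 1
        push_cast
        field_simp
        ring
      · rw [if_neg hc, if_neg hc]
    rw [Finset.sum_congr rfl (fun r hr => Finset.sum_congr rfl (fun h' hh' => e2 r hr h' hh'))]
    rw [Finset.sum_comm]
    have e3 : ∀ h' ∈ range (q^n),
        (∑ r ∈ range q, if (h':ℤ) % (q:ℤ)^δ = a % (q:ℤ)^δ then
            (1/(q:ℝ)) * phiq q f ((t + h')/(q:ℝ)^(n+1) + (r:ℝ)/q) *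
              ‖FL q f n (t + h')‖ else 0)
        = if (h':ℤ) % (q:ℤ)^δ = a % (q:ℤ)^δ then
            Psiq q f ((t + h')/(q:ℝ)^(n+1)) * ‖FL q f n (t + h')‖ else 0 := by
      intro h' _
      by_cases hc : (h':ℤ) % (q:ℤ)^δ = a % (q:ℤ)^δ
      · simp only [if_pos hc]
        unfold Psiq
        rw [Finset.mul_sum, Finset.sum_mul]
      · simp [hc]
    rw [Finset.sum_congr rfl e3]
    calc ∑ h' ∈ range (q^n), (if (h':ℤ) % (q:ℤ)^δ = a % (q:ℤ)^δ then
            Psiq q f ((t + h')/(q:ℝ)^(n+1)) * ‖FL q f n (t + h')‖ else 0)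
        ≤ ∑ h' ∈ range (q^n), (if (h':ℤ) % (q:ℤ)^δ = a % (q:ℤ)^δ then
            B * ‖FL q f n (t + h')‖ else 0) := by
          refine Finset.sum_le_sum fun h' _ => ?_
          by_cases hc : (h':ℤ) % (q:ℤ)^δ = a % (q:ℤ)^δ
          · simp only [if_pos hc]
            exact mul_le_mul_of_nonneg_right (hB _) (norm_nonneg _)
          · simp [hc]
      _ = B * ∑ h' ∈ (range (q^n)).filter
            (fun h' : ℕ => (h':ℤ) % (q:ℤ)^δ = a % (q:ℤ)^δ),
            ‖FL q f n (t + h')‖ := by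
          rw [Finset.mul_sum, ← Finset.sum_filter]
      _ ≤ B * (B ^ (n - δ) * ‖FL q f δ (t + a)‖) :=
          mul_le_mul_of_nonneg_left ih hB0
      _ = B ^ (n + 1 - δ) * ‖FL q f δ (t + a)‖ := by
          rw [show n + 1 - δ = (n - δ) + 1 from by omega, pow_succ]
          ring

theorem FL_L1_estimate' (hq : 2 ≤ q)
    (hf1 : ∀ n, ‖f n‖ = 1)
    (hfm : ∀ a b : ℕ, b < q → f (a * q + b) = f a * f b)
    (η : ℝ) (hη : η = (1 / Real.log q) * Real.log (sSup (Psiq q f '' Set.Icc 0 1)))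
    (δ lam : ℕ) (hδ : δ ≤ lam) (a : ℤ) (t : ℝ) :
    ∑ h ∈ (Finset.range (q ^ lam)).filter (fun h : ℕ => (h : ℤ) % (q : ℤ) ^ δ = a % (q : ℤ) ^ δ),
        ‖FL q f lam (t + h)‖
      ≤ (q : ℝ) ^ (η * ((lam : ℝ) - δ)) * ‖FL q f δ (t + a)‖ := by
  set M := sSup (Psiq q f '' Set.Icc 0 1) with hM
  have hub : ∀ s, Psiq q f s ≤ M := Psiq_le_sSup hq hf1
  have hM0 : 0 ≤ M := le_trans (Psiq_nonneg 0) (hub 0)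
  rcases hM0.eq_or_lt with h0 | hMpos
  · have hub1 : ∀ s, Psiq q f s ≤ 1 := fun s => le_trans (hub s) (by rw [← h0]; norm_num)
    have hkey := key_induction hq hf1 hfm δ a t 1 zero_le_one hub1 lam hδ
    rw [one_pow, one_mul] at hkey
    have hη0 : η = 0 := by rw [hη, ← h0, Real.log_zero, mul_zero]
    rw [hη0, zero_mul, Real.rpow_zero, one_mul]
    exact hkey
  · refine le_trans (key_induction hq hf1 hfm δ a t M hM0 hub lam hδ) (le_of_eq ?_)
    congr 1
    have hq1 : (1:ℝ) < q := by exact_mod_cast Nat.lt_of_lt_of_le Nat.one_lt_two hq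
    have hlogq : Real.log q ≠ 0 := ne_of_gt (Real.log_pos hq1)
    have hcast : ((lam - δ : ℕ) : ℝ) = (lam : ℝ) - δ := Nat.cast_sub hδ
    calc M ^ (lam - δ) = M ^ (((lam - δ : ℕ) : ℝ)) := (Real.rpow_natCast M _).symm
      _ = Real.exp (Real.log M * ((lam:ℝ) - δ)) := by rw [Real.rpow_def_of_pos hMpos, hcast]
      _ = (q:ℝ) ^ (η * ((lam:ℝ) - δ)) := by
          rw [Real.rpow_def_of_pos (by positivity : (0:ℝ) < (q:ℝ)), hη]
          congr 1
          field_simp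


/-- L¹ estimate along arithmetic progressions for the Fourier transform of a
strongly q-multiplicative function: with `η = (1/log q)·log(max_{0≤t≤1} Ψ_q(t))`, for
`0 ≤ δ ≤ λ`, `a ∈ ℤ`, `t ∈ ℝ`:
`Σ_{0≤h<q^λ, h ≡ a mod q^δ} |F_λ(t+h)| ≤ q^{η(λ-δ)} |F_δ(t+a)|`. -/
theorem FL_L1_estimate (q : ℕ) (hq : 2 ≤ q) (f : ℕ → ℂ)
    (hf1 : ∀ n, ‖f n‖ = 1)
    (hfm : ∀ a b : ℕ, b < q → f (a * q + b) = f a * f b)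
    (η : ℝ) (hη : η = (1 / Real.log q) * Real.log (sSup (Psiq q f '' Set.Icc 0 1)))
    (δ lam : ℕ) (hδ : δ ≤ lam) (a : ℤ) (t : ℝ) :
    ∑ h ∈ (Finset.range (q ^ lam)).filter (fun h : ℕ => (h : ℤ) % (q : ℤ) ^ δ = a % (q : ℤ) ^ δ),
        ‖FL q f lam (t + h)‖
      ≤ (q : ℝ) ^ (η * ((lam : ℝ) - δ)) * ‖FL q f δ (t + a)‖ :=
  FL_L1_estimate' hq hf1 hfm η hη δ lam hδ a t
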